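/- For every graph G, tree-tw(G) + 1 ≤ tree-α(G) · tree-χ(G), where tree-tw(G) is the minimum over tree-decompositions of G of the maximum treewidth of a subgraph induced by a bag. -/

import Mathlib

open SimpleGraph

structure TreeDecomp {V : Type} (G : SimpleGraph V) where
  ι : Type
  tree : SimpleGraph ι
  isTree : tree.IsTree
  bag : ι → Finset V
  covers_edge : ∀ ⦃u v : V⦄, G.Adj u v → ∃ t, u ∈ bag t ∧ v ∈ bag t
  support_connected : ∀ v : V, (tree.induce {t | v ∈ bag t}).Connected

noncomputable def indepNum {V : Type} (G : SimpleGraph V) (s : Set V) : ℕ :=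
  sSup {n | ∃ t : Finset V, ↑t ⊆ s ∧ (↑t : Set V).Pairwise (fun a b => ¬ G.Adj a b) ∧ t.card = n}

noncomputable def alpha {V : Type} (G : SimpleGraph V) : ℕ := indepNum G Set.univ

noncomputable def chiNat {V : Type} (G : SimpleGraph V) : ℕ := G.chromaticNumber.toNat

noncomputable def tw {V : Type} (G : SimpleGraph V) : ℕ :=
  sInf {w | ∃ D : TreeDecomp G, ∀ t, (D.bag t).card ≤ w + 1}

noncomputable def treeAlpha {V : Type} (G : SimpleGraph V) : ℕ :=
  sInf {k | ∃ D : TreeDecomp G, ∀ t, indepNum G ↑(D.bag t) ≤ k}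

noncomputable def treeChi {V : Type} (G : SimpleGraph V) : ℕ :=
  sInf {k | ∃ D : TreeDecomp G, ∀ t, chiNat (G.induce ↑(D.bag t)) ≤ k}

noncomputable def treeTw {V : Type} (G : SimpleGraph V) : ℕ :=
  sInf {k | ∃ D : TreeDecomp G, ∀ t, tw (G.induce ↑(D.bag t)) ≤ k}

noncomputable def omegaNum {V : Type} (G : SimpleGraph V) : ℕ :=
  sSup {n | ∃ t : Finset V, G.IsClique ↑t ∧ t.card = n}

def completion {V : Type} (H : SimpleGraph V) :
    SimpleGraph (V ⊕ {p : Sym2 V // ¬ p.IsDiag ∧ p ∉ H.edgeSet}) :=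
  SimpleGraph.fromRel (fun x y =>
    match x, y with
    | .inl u, .inl v => H.Adj u v
    | .inl u, .inr p => u ∈ p.1
    | _, _ => False)

/-! ### Auxiliary lemmas -/

section Aux

variable {V : Type} (G : SimpleGraph V)

lemma le_indepNum (B t : Finset V) (h1 : t ⊆ B)
    (h2 : (↑t : Set V).Pairwise (fun a b => ¬ G.Adj a b)) :
    t.card ≤ indepNum G ↑B := by
  apply le_csSup
  · refine ⟨B.card, ?_⟩
    rintro n ⟨u, hu, -, rfl⟩
    exact Finset.card_le_card (Finset.coe_subset.mp hu)
  · exact ⟨t, Finset.coe_subset.mpr h1, h2, rfl⟩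

lemma indepNum_mono (A B : Finset V) (h : A ⊆ B) :
    indepNum G ↑A ≤ indepNum G ↑B := by
  apply csSup_le
  · exact ⟨0, ∅, by simp, by simp, by simp⟩
  · rintro n ⟨u, hu, hp, rfl⟩
    exact le_indepNum G B u ((Finset.coe_subset.mp hu).trans h) hp

lemma card_coe_set (B : Finset V) : Fintype.card (↑B : Set V) = B.card := by
  rw [← Fintype.card_coe B]
  exact Fintype.card_congr (Equiv.subtypeEquivRight (fun x => by simp))

lemma indepNum_le_card (B : Finset V) : indepNum G ↑B ≤ B.card := by
  apply csSup_le
  · exact ⟨0, ∅, by simp, by simp, by simp⟩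
  · rintro n ⟨u, hu, -, rfl⟩
    exact Finset.card_le_card (Finset.coe_subset.mp hu)

lemma chiNat_le_of_colorable {W : Type} (H : SimpleGraph W) {n : ℕ}
    (h : H.Colorable n) : chiNat H ≤ n :=
  ENat.toNat_le_of_le_coe h.chromaticNumber_le

lemma chiNat_mono (A B : Finset V) (h : A ⊆ B) :
    chiNat (G.induce (↑A : Set V)) ≤ chiNat (G.induce (↑B : Set V)) := by
  obtain ⟨C⟩ := (G.induce (↑B : Set V)).colorable_chromaticNumber_of_fintype
  apply chiNat_le_of_colorable
  exact ⟨Coloring.mk (fun v => C ⟨v.1, h v.2⟩) (fun {v w} hadj => C.valid hadj)⟩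

lemma card_le_indep_mul_chi (B : Finset V) :
    B.card ≤ indepNum G ↑B * chiNat (G.induce (↑B : Set V)) := by
  classical
  obtain ⟨C⟩ := (G.induce (↑B : Set V)).colorable_chromaticNumber_of_fintype
  set k := chiNat (G.induce (↑B : Set V)) with hk
  rw [show B.card = Fintype.card (↑B : Set V) from (card_coe_set B).symm, ← Finset.card_univ]
  rw [Finset.card_eq_sum_card_fiberwise (f := C) (t := Finset.univ)
    (fun x _ => Finset.mem_univ _)]
  have hfib : ∀ i : Fin k,
      (Finset.univ.filter (fun v => C v = i)).card ≤ indepNum G ↑B := by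
    intro i
    set F := (Finset.univ.filter (fun v : (↑B : Set V) => C v = i)) with hF
    have hinj : Function.Injective (Subtype.val : (↑B : Set V) → V) :=
      Subtype.val_injective
    rw [← Finset.card_image_of_injective F hinj]
    apply le_indepNum
    · intro x hx
      obtain ⟨v, hv, rfl⟩ := Finset.mem_image.mp hx
      exact v.2
    · rintro x hx y hy hxy hadj
      obtain ⟨v, hv, rfl⟩ := Finset.mem_image.mp (by exact_mod_cast hx)
      obtain ⟨w, hw, rfl⟩ := Finset.mem_image.mp (by exact_mod_cast hy)
      have hv' : C v = i := (Finset.mem_filter.mp hv).2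
      have hw' : C w = i := (Finset.mem_filter.mp hw).2
      exact C.valid hadj (hv'.trans hw'.symm)
  calc _
      ≤ ∑ _i : Fin k, indepNum G ↑B := Finset.sum_le_sum (fun i _ => by refine le_trans (le_of_eq ?_) (hfib i); congr 1; ext x; simp)
    _ = k * indepNum G ↑B := by simp [Finset.sum_const, mul_comm]
    _ = indepNum G ↑B * k := mul_comm _ _

/-- The trivial tree decomposition with a single bag. -/
noncomputable def trivialDecomp {V : Type} [Fintype V] [Nonempty V] (G : SimpleGraph V) :
    TreeDecomp G where
  ι := Unit
  tree := ⊥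
  isTree := by
    refine ⟨Connected.mk (fun u v => by cases u; cases v; exact Reachable.refl _), ?_⟩
    intro v c hc
    cases c with
    | nil => exact hc.ne_nil rfl
    | cons h p => simp at h
  bag := fun _ => Finset.univ
  covers_edge := fun u v _ => ⟨(), Finset.mem_univ _, Finset.mem_univ _⟩
  support_connected := fun v => by
    haveI : Nonempty {t : Unit | v ∈ (Finset.univ : Finset V)} := ⟨⟨(), by simp⟩⟩
    exact Connected.mk (fun u w => by rw [Subsingleton.elim u w])

open scoped Classical

/-- Restriction of a tree decomposition to an induced subgraph. -/
noncomputable def TreeDecomp.restrict {V : Type} {G : SimpleGraph V} (D : TreeDecomp G)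
    (s : Set V) [Fintype s] : TreeDecomp (G.induce s) where
  ι := D.ι
  tree := D.tree
  isTree := D.isTree
  bag := fun t => Finset.univ.filter (fun v : s => (v : V) ∈ D.bag t)
  covers_edge := by
    intro u v huv
    obtain ⟨t, h1, h2⟩ := D.covers_edge huv
    exact ⟨t, by simpa using h1, by simpa using h2⟩
  support_connected := by
    intro v
    have h : {t | v ∈ Finset.univ.filter (fun w : s => (w : V) ∈ D.bag t)}
        = {t | (v : V) ∈ D.bag t} := by
      ext t; simp
    rw [h]
    exact D.support_connected v.1

end Aux

theorem stmt4 {V : Type} [Fintype V] [Nonempty V] (G : SimpleGraph V) :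
    treeTw G + 1 ≤ treeAlpha G * treeChi G := by
  classical
  -- witnesses achieving treeAlpha and treeChi
  have hA : treeAlpha G ∈ {k | ∃ D : TreeDecomp G, ∀ t, indepNum G ↑(D.bag t) ≤ k} := by
    apply Nat.sInf_mem
    exact ⟨Fintype.card V, trivialDecomp G, fun t =>
      (indepNum_le_card G _).trans (by simpa using Finset.card_le_univ ((trivialDecomp G).bag t))⟩
  have hC : treeChi G ∈ {k | ∃ D : TreeDecomp G, ∀ t, chiNat (G.induce ↑(D.bag t)) ≤ k} := by
    apply Nat.sInf_mem
    refine ⟨Fintype.card V, trivialDecomp G, fun t => ?_⟩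
    calc chiNat (G.induce ↑((trivialDecomp G).bag t))
        ≤ Fintype.card (↑((trivialDecomp G).bag t) : Set V) :=
          chiNat_le_of_colorable _ (colorable_of_fintype _)
      _ = ((trivialDecomp G).bag t).card := card_coe_set _
      _ ≤ Fintype.card V := by simpa using Finset.card_le_univ ((trivialDecomp G).bag t)
  obtain ⟨Da, hDa⟩ := hA
  obtain ⟨Dc, hDc⟩ := hC
  set a := treeAlpha G with ha
  set c := treeChi G with hc
  -- a vertex to show positivity
  obtain ⟨v⟩ := (inferInstance : Nonempty V)
  -- every vertex is in some bag
  have hbag : ∀ (D : TreeDecomp G), ∃ t, v ∈ D.bag t := by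
    intro D
    obtain ⟨t, ht⟩ := (D.support_connected v).nonempty
    exact ⟨t, ht⟩
  have ha1 : 1 ≤ a := by
    obtain ⟨t, ht⟩ := hbag Da
    refine le_trans ?_ (hDa t)
    have := le_indepNum G (Da.bag t) {v} (by simpa using ht) (by simp)
    simpa using this
  have hc1 : 1 ≤ c := by
    obtain ⟨t, ht⟩ := hbag Dc
    refine le_trans ?_ (hDc t)
    by_contra hlt
    have h0 : chiNat (G.induce ↑(Dc.bag t)) = 0 := by omega
    have hcol := (G.induce (↑(Dc.bag t) : Set V)).colorable_chromaticNumber_of_fintype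
    rw [show ((G.induce (↑(Dc.bag t) : Set V)).chromaticNumber).toNat
        = chiNat (G.induce ↑(Dc.bag t)) from rfl, h0] at hcol
    have hempty := (G.induce (↑(Dc.bag t) : Set V)).isEmpty_of_colorable_zero hcol
    exact hempty.elim ⟨v, by simpa using ht⟩
  have hac : 1 ≤ a * c := Nat.one_le_iff_ne_zero.mpr (by positivity)
  -- main bound : treeTw G ≤ a * c - 1
  have hmain : treeTw G ≤ a * c - 1 := by
    apply Nat.sInf_le
    refine ⟨Dc, fun t => ?_⟩
    apply Nat.sInf_le
    refine ⟨Da.restrict (↑(Dc.bag t) : Set V), fun s => ?_⟩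
    have hcard : ((Da.restrict (↑(Dc.bag t) : Set V)).bag s).card ≤ a * c := by
      set F := ((Da.restrict (↑(Dc.bag t) : Set V)).bag s).image
          (Subtype.val : (↑(Dc.bag t) : Set V) → V) with hFdef
      have hinj : Function.Injective (Subtype.val : (↑(Dc.bag t) : Set V) → V) :=
        Subtype.val_injective
      have hcardeq : ((Da.restrict (↑(Dc.bag t) : Set V)).bag s).card = F.card :=
        (Finset.card_image_of_injective _ hinj).symm
      have hFa : F ⊆ Da.bag s := by
        intro x hx
        obtain ⟨w, hw, rfl⟩ := Finset.mem_image.mp hx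
        exact (Finset.mem_filter.mp hw).2
      have hFc : F ⊆ Dc.bag t := by
        intro x hx
        obtain ⟨w, hw, rfl⟩ := Finset.mem_image.mp hx
        exact w.2
      calc ((Da.restrict (↑(Dc.bag t) : Set V)).bag s).card = F.card := hcardeq
        _ ≤ indepNum G ↑F * chiNat (G.induce (↑F : Set V)) := card_le_indep_mul_chi G F
        _ ≤ a * c := by
            apply Nat.mul_le_mul
            · exact le_trans (indepNum_mono G F (Da.bag s) hFa) (hDa s)
            · exact le_trans (chiNat_mono G F (Dc.bag t) hFc) (hDc t)
    omega
  omega
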